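/- Under the hypotheses that r, g are closed convex proper, f is convex differentiable with L-Lipschitz gradient, 0 < α < 3/(2L), and z* satisfies p(z*) = 0 (where p is the PPG residual operator), the iterates z^{k+1} = z^k − αp(z^k) satisfy: ‖z^{k+1} − z*‖² ≤ ‖z^k − z*‖² − α²(1 − 2αL/3)‖p(z^k)‖² − (α/(2L))‖∇f(x^{k+1/2}) − ∇f(x*)‖², where x^{k+1/2} = prox_{αr}(z^k) and x* = prox_{αr}(z*). -/

import Mathlib

open Set Filter Topology
open scoped RealInnerProductSpace

noncomputable section

/-- `f` is closed (lower semicontinuous), convex, and proper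
as an extended-real-valued function. -/
def ClosedConvexProper {E : Type*} [NormedAddCommGroup E] [NormedSpace ℝ E]
    (f : E → EReal) : Prop :=
  LowerSemicontinuous f ∧
  (∀ (a b : ℝ) (x y : E), 0 ≤ a → 0 ≤ b → a + b = 1 →
    f (a • x + b • y) ≤ (a : EReal) * f x + (b : EReal) * f y) ∧
  (∀ x, f x ≠ ⊥) ∧ (∃ x, f x ≠ ⊤)

/-- `p` is a minimizer of the prox objective of the extended-real-valued `f` at `x₀`. -/
def IsProxPt {E : Type*} [NormedAddCommGroup E] [InnerProductSpace ℝ E]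
    (f : E → EReal) (x₀ p : E) : Prop :=
  IsMinOn (fun x => f x + ((1 / 2 * ‖x - x₀‖ ^ 2 : ℝ) : EReal)) Set.univ p

/-- `p` is a minimizer of the prox objective of the real-valued `f` at `x₀`. -/
def IsProxPtR {E : Type*} [NormedAddCommGroup E] [InnerProductSpace ℝ E]
    (f : E → ℝ) (x₀ p : E) : Prop :=
  IsMinOn (fun x => f x + 1 / 2 * ‖x - x₀‖ ^ 2) Set.univ p

variable {E : Type*} [NormedAddCommGroup E] [InnerProductSpace ℝ E] [CompleteSpace E]

lemma myLineDeriv (f : E → ℝ) (f' : E → E) (hf' : ∀ x, HasGradientAt f (f' x) x)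
    (x v : E) (t : ℝ) :
    HasDerivAt (fun s : ℝ => f (x + s • v)) ⟪f' (x + t • v), v⟫ t := by
  have h1 : HasDerivAt (fun s : ℝ => x + s • v) v t := by
    simpa using ((hasDerivAt_id t).smul_const v).const_add x
  have h2 := (hasGradientAt_iff_hasFDerivAt.mp (hf' (x + t • v))).comp_hasDerivAt t h1
  simpa [InnerProductSpace.toDual_apply_apply, Function.comp_def] using h2

lemma descent (f : E → ℝ) (f' : E → E) (hf' : ∀ x, HasGradientAt f (f' x) x)
    (L : ℝ) (hL : 0 < L) (hLip : ∀ x y, ‖f' x - f' y‖ ≤ L * ‖x - y‖) (x y : E) :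
    f y ≤ f x + ⟪f' x, y - x⟫ + L / 2 * ‖y - x‖ ^ 2 := by
  set v := y - x with hv
  set φ : ℝ → ℝ := fun t => f (x + t • v) - t * ⟪f' x, v⟫ - L / 2 * t ^ 2 * ‖v‖ ^ 2 with hφ
  have hφd : ∀ t : ℝ, HasDerivAt φ (⟪f' (x + t • v), v⟫ - ⟪f' x, v⟫ - L * t * ‖v‖ ^ 2) t := by
    intro t
    have h1 := myLineDeriv f f' hf' x v t
    have h2 : HasDerivAt (fun t : ℝ => t * ⟪f' x, v⟫) ⟪f' x, v⟫ t := by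
      simpa using (hasDerivAt_id t).mul_const ⟪f' x, v⟫
    have h3 : HasDerivAt (fun t : ℝ => L / 2 * t ^ 2 * ‖v‖ ^ 2) (L * t * ‖v‖ ^ 2) t := by
      have := ((hasDerivAt_pow 2 t).const_mul (L / 2)).mul_const (‖v‖ ^ 2)
      exact this.congr_deriv (by ring)
    exact (h1.sub h2).sub h3
  have anti : AntitoneOn φ (Icc (0 : ℝ) 1) := by
    apply antitoneOn_of_deriv_nonpos (convex_Icc 0 1)
    · exact fun t _ => (hφd t).continuousAt.continuousWithinAt
    · exact fun t _ => (hφd t).differentiableAt.differentiableWithinAt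
    · intro t ht
      rw [interior_Icc] at ht
      rw [(hφd t).deriv]
      have hcs : ⟪f' (x + t • v) - f' x, v⟫ ≤ ‖f' (x + t • v) - f' x‖ * ‖v‖ :=
        real_inner_le_norm _ _
      have hlip := hLip (x + t • v) x
      have hnt : ‖x + t • v - x‖ = t * ‖v‖ := by
        rw [add_sub_cancel_left, norm_smul, Real.norm_eq_abs, abs_of_pos ht.1]
      rw [hnt] at hlip
      have hmul := mul_le_mul_of_nonneg_right hlip (norm_nonneg v)
      have hsub : ⟪f' (x + t • v) - f' x, v⟫ = ⟪f' (x + t • v), v⟫ - ⟪f' x, v⟫ :=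
        inner_sub_left _ _ _
      nlinarith [hcs, hmul]
  have h01 : φ 1 ≤ φ 0 := anti (left_mem_Icc.mpr zero_le_one) (right_mem_Icc.mpr zero_le_one)
    zero_le_one
  have e0 : φ 0 = f x := by simp [hφ]
  have e1 : φ 1 = f y - ⟪f' x, v⟫ - L / 2 * ‖v‖ ^ 2 := by
    simp [hφ, hv]
  rw [e0, e1] at h01
  linarith

lemma grad_ineq (f : E → ℝ) (hconv : ConvexOn ℝ Set.univ f) (f' : E → E)
    (hf' : ∀ x, HasGradientAt f (f' x) x) (x y : E) :
    f x + ⟪f' x, y - x⟫ ≤ f y := by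
  set v := y - x with hv
  have hg : ConvexOn ℝ Set.univ (fun t : ℝ => f (x + t • v)) := by
    have h := hconv.comp_affineMap (AffineMap.lineMap x y : ℝ →ᵃ[ℝ] E)
    have he : (f ∘ (AffineMap.lineMap x y : ℝ →ᵃ[ℝ] E)) = fun t : ℝ => f (x + t • v) := by
      funext t
      simp [AffineMap.lineMap_apply, hv, add_comm]
    rw [he] at h
    simpa using h
  have hd0 : HasDerivAt (fun t : ℝ => f (x + t • v)) ⟪f' x, v⟫ 0 := by
    have := myLineDeriv f f' hf' x v 0
    simpa using this
  have hslope := hg.le_slope_of_hasDerivWithinAt (mem_univ (0 : ℝ)) (mem_univ (1 : ℝ))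
    one_pos hd0.hasDerivWithinAt
  rw [slope_def_field] at hslope
  simp at hslope
  -- hslope : ⟪f' x, v⟫ ≤ f (x + v) - f x  (roughly)
  have hxy : x + v = y := by rw [hv]; abel
  rw [hxy] at hslope
  linarith

lemma coco (f : E → ℝ) (hconv : ConvexOn ℝ Set.univ f) (f' : E → E)
    (hf' : ∀ x, HasGradientAt f (f' x) x)
    (L : ℝ) (hL : 0 < L) (hLip : ∀ x y, ‖f' x - f' y‖ ≤ L * ‖x - y‖) (x y : E) :
    ‖f' x - f' y‖ ^ 2 ≤ L * ⟪f' x - f' y, x - y⟫ := by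
  have key : ∀ a b : E, f a + ⟪f' a, b - a⟫ + 1 / (2 * L) * ‖f' b - f' a‖ ^ 2 ≤ f b := by
    intro a b
    set δ := f' b - f' a with hδ
    set c := b - (1 / L) • δ with hc
    have h1 := descent f f' hf' L hL hLip b c
    have h2 := grad_ineq f hconv f' hf' a c
    have hcb : c - b = -((1 / L) • δ) := by rw [hc]; abel
    have hca : c - a = (b - a) - (1 / L) • δ := by rw [hc]; abel
    rw [hcb] at h1
    rw [hca] at h2
    rw [inner_neg_right, real_inner_smul_right] at h1
    rw [inner_sub_right, real_inner_smul_right] at h2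
    have hnrm : ‖-((1 / L) • δ)‖ ^ 2 = (1 / L) ^ 2 * ‖δ‖ ^ 2 := by
      rw [norm_neg, norm_smul, Real.norm_eq_abs, mul_pow, sq_abs]
    rw [hnrm] at h1
    have hδδ : ⟪f' b, δ⟫ - ⟪f' a, δ⟫ = ‖δ‖ ^ 2 := by
      rw [← inner_sub_left, ← hδ, real_inner_self_eq_norm_sq]
    have e1 : L / 2 * ((1 / L) ^ 2 * ‖δ‖ ^ 2) = 1 / (2 * L) * ‖δ‖ ^ 2 := by
      field_simp
    have e2 : (1 / L) * ⟪f' b, δ⟫ - (1 / L) * ⟪f' a, δ⟫ = (1 / L) * ‖δ‖ ^ 2 := by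
      rw [← mul_sub, hδδ]
    have e3 : (1 / L) * ‖δ‖ ^ 2 - 1 / (2 * L) * ‖δ‖ ^ 2 = 1 / (2 * L) * ‖δ‖ ^ 2 := by
      field_simp
      ring
    nlinarith [h1, h2]
  have k1 := key x y
  have k2 := key y x
  have hsymm : ‖f' x - f' y‖ = ‖f' y - f' x‖ := norm_sub_rev _ _
  have hid : ⟪f' x, y - x⟫ + ⟪f' y, x - y⟫ = -⟪f' x - f' y, x - y⟫ := by
    simp only [inner_sub_left, inner_sub_right]
    ring
  have hfin : 1 / L * ‖f' x - f' y‖ ^ 2 ≤ ⟪f' x - f' y, x - y⟫ := by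
    rw [hsymm] at k2 ⊢
    have hsum : 1 / (2 * L) * ‖f' y - f' x‖ ^ 2 + 1 / (2 * L) * ‖f' y - f' x‖ ^ 2 ≤
        ⟪f' x - f' y, x - y⟫ := by linarith [k1, k2, hid]
    have hEq : 1 / L * ‖f' y - f' x‖ ^ 2 =
        1 / (2 * L) * ‖f' y - f' x‖ ^ 2 + 1 / (2 * L) * ‖f' y - f' x‖ ^ 2 := by
      field_simp
      ring
    rw [hEq]
    exact hsum
  have := mul_le_mul_of_nonneg_left hfin hL.le
  have eL : L * (1 / L * ‖f' x - f' y‖ ^ 2) = ‖f' x - f' y‖ ^ 2 := by field_simp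
  rw [eL] at this
  exact this


variable {E : Type*} [NormedAddCommGroup E] [InnerProductSpace ℝ E]

lemma prox_aux (α : ℝ) (hα : 0 < α) (r : E → EReal) (hr : ClosedConvexProper r)
    (w p q : E) (Rp Rq : ℝ) (hRp : r p = (Rp : EReal)) (hRq : r q = (Rq : EReal))
    (hmin : IsProxPt (fun x => (α : EReal) * r x) w p) :
    α * Rp - α * Rq ≤ ⟪p - w, q - p⟫ := by
  have key : ∀ t : ℝ, 0 < t → t ≤ 1 →
      α * Rp - α * Rq ≤ ⟪p - w, q - p⟫ + t / 2 * ‖q - p‖ ^ 2 := by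
    intro t ht ht1
    have hxt : (1 - t) • p + t • q = p + t • (q - p) := by module
    have hconv := hr.2.1 (1 - t) t p q (by linarith) ht.le (by ring)
    rw [hxt, hRp, hRq] at hconv
    have hconv' : r (p + t • (q - p)) ≤ (((1 - t) * Rp + t * Rq : ℝ) : EReal) := by
      refine hconv.trans_eq ?_
      norm_cast
    have hmul : (α : EReal) * r (p + t • (q - p)) ≤
        ((α * ((1 - t) * Rp + t * Rq) : ℝ) : EReal) := by
      rw [EReal.coe_mul]
      exact mul_le_mul_of_nonneg_left hconv' (by exact_mod_cast hα.le)
    have hmin1 := isMinOn_iff.mp hmin (p + t • (q - p)) (mem_univ _)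
    simp only [hRp] at hmin1
    have hmin2 : ((α * Rp + 1 / 2 * ‖p - w‖ ^ 2 : ℝ) : EReal) ≤
        ((α * ((1 - t) * Rp + t * Rq) + 1 / 2 * ‖p + t • (q - p) - w‖ ^ 2 : ℝ) : EReal) := by
      calc ((α * Rp + 1 / 2 * ‖p - w‖ ^ 2 : ℝ) : EReal)
          = (α : EReal) * (Rp : EReal) + ((1 / 2 * ‖p - w‖ ^ 2 : ℝ) : EReal) := by norm_cast
        _ ≤ (α : EReal) * r (p + t • (q - p)) +
            ((1 / 2 * ‖p + t • (q - p) - w‖ ^ 2 : ℝ) : EReal) := hmin1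
        _ ≤ ((α * ((1 - t) * Rp + t * Rq) : ℝ) : EReal) +
            ((1 / 2 * ‖p + t • (q - p) - w‖ ^ 2 : ℝ) : EReal) := add_le_add_left hmul _
        _ = _ := by norm_cast
    have hreal := EReal.coe_le_coe_iff.mp hmin2
    have hvec : p + t • (q - p) - w = (p - w) + t • (q - p) := by module
    have hexp : ‖p + t • (q - p) - w‖ ^ 2 =
        ‖p - w‖ ^ 2 + 2 * (t * ⟪p - w, q - p⟫) + t ^ 2 * ‖q - p‖ ^ 2 := by
      rw [hvec, norm_add_sq_real, real_inner_smul_right, norm_smul, Real.norm_eq_abs,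
        mul_pow, sq_abs]
    rw [hexp] at hreal
    nlinarith [hreal, ht]
  by_contra hcon
  push_neg at hcon
  set ε := α * Rp - α * Rq - ⟪p - w, q - p⟫ with hε
  have hεpos : 0 < ε := by simp only [hε]; linarith
  set D := ‖q - p‖ ^ 2 with hD
  have hDnn : 0 ≤ D := sq_nonneg _
  set t := min 1 (ε / (D + 1)) with htdef
  have ht : 0 < t := lt_min one_pos (by positivity)
  have ht1 : t ≤ 1 := min_le_left _ _
  have hk := key t ht ht1
  have ht2 : t ≤ ε / (D + 1) := min_le_right _ _
  have h1 : t * D ≤ ε / (D + 1) * D := mul_le_mul_of_nonneg_right ht2 hDnn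
  have h2 : ε / (D + 1) * D < ε := by
    rw [div_mul_eq_mul_div, div_lt_iff₀ (by positivity)]
    nlinarith
  have h3 : t / 2 * D ≤ t * D := by nlinarith
  simp only [hε] at hk h2 h1 h3 ⊢
  linarith

lemma prox_mono (α : ℝ) (hα : 0 < α) (r : E → EReal) (hr : ClosedConvexProper r)
    (w₁ w₂ p₁ p₂ : E) (h₁ : IsProxPt (fun x => (α : EReal) * r x) w₁ p₁)
    (h₂ : IsProxPt (fun x => (α : EReal) * r x) w₂ p₂) :
    0 ≤ ⟪(w₁ - p₁) - (w₂ - p₂), p₁ - p₂⟫ := by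
  obtain ⟨x₀, hx₀⟩ := hr.2.2.2
  have hbot := hr.2.2.1
  have hfin : ∀ (w p : E), IsProxPt (fun x => (α : EReal) * r x) w p →
      ∃ R : ℝ, r p = (R : EReal) := by
    intro w p hmin
    obtain ⟨R₀, hR₀⟩ : ∃ R₀ : ℝ, r x₀ = (R₀ : EReal) := by
      lift r x₀ to ℝ using ⟨hx₀, hbot x₀⟩ with R₀ hR₀
      exact ⟨R₀, rfl⟩
    have hmin1 := isMinOn_iff.mp hmin x₀ (mem_univ _)
    simp only [hR₀] at hmin1
    have hptop : r p ≠ ⊤ := by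
      intro htop
      simp only [htop] at hmin1
      rw [EReal.mul_top_of_pos (by exact_mod_cast hα : (0 : EReal) < (α : EReal)),
        EReal.top_add_coe] at hmin1
      rw [← EReal.coe_mul] at hmin1
      rw [← EReal.coe_add] at hmin1
      exact (EReal.coe_ne_top _) (top_le_iff.mp hmin1)
    exact ⟨(r p).toReal, (EReal.coe_toReal hptop (hbot p)).symm⟩
  obtain ⟨R₁, hR₁⟩ := hfin w₁ p₁ h₁
  obtain ⟨R₂, hR₂⟩ := hfin w₂ p₂ h₂
  have k₁ := prox_aux α hα r hr w₁ p₁ p₂ R₁ R₂ hR₁ hR₂ h₁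
  have k₂ := prox_aux α hα r hr w₂ p₂ p₁ R₂ R₁ hR₂ hR₁ h₂
  have hid : ⟪(w₁ - p₁) - (w₂ - p₂), p₁ - p₂⟫ =
      ⟪p₁ - w₁, p₂ - p₁⟫ + ⟪p₂ - w₂, p₁ - p₂⟫ := by
    simp only [inner_sub_left, inner_sub_right]
    ring
  linarith

set_option maxHeartbeats 1000000 in
/-- Fejér-monotone descent inequality for the PPG iteration. -/
theorem stmt12
    {d : ℕ} (α : ℝ) (hα : 0 < α)
    (r g : EuclideanSpace ℝ (Fin d) → EReal)
    (hr : ClosedConvexProper r) (hg : ClosedConvexProper g)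
    (f : EuclideanSpace ℝ (Fin d) → ℝ) (hfconv : ConvexOn ℝ Set.univ f)
    (f' : EuclideanSpace ℝ (Fin d) → EuclideanSpace ℝ (Fin d))
    (hf' : ∀ x, HasGradientAt f (f' x) x)
    (Pr Pg : EuclideanSpace ℝ (Fin d) → EuclideanSpace ℝ (Fin d))
    (hPr : ∀ w, IsProxPt (fun x => (α : EReal) * r x) w (Pr w))
    (hPg : ∀ w, IsProxPt (fun x => (α : EReal) * g x) w (Pg w))
    (P : EuclideanSpace ℝ (Fin d) → EuclideanSpace ℝ (Fin d))
    (hP : ∀ z, P z = α⁻¹ • (Pr z - Pg ((2 : ℝ) • Pr z - z - α • f' (Pr z))))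
    (L : ℝ) (hL : 0 < L)
    (hLip : ∀ x y, ‖f' x - f' y‖ ≤ L * ‖x - y‖)
    (hαL : α < 3 / (2 * L))
    (z : ℕ → EuclideanSpace ℝ (Fin d))
    (hiter : ∀ k, z (k + 1) = z k - α • P (z k))
    (zs : EuclideanSpace ℝ (Fin d)) (hzs : P zs = 0) :
    ∀ k, ‖z (k + 1) - zs‖ ^ 2 ≤
      ‖z k - zs‖ ^ 2 - α ^ 2 * (1 - 2 * α * L / 3) * ‖P (z k)‖ ^ 2 -
        α / (2 * L) * ‖f' (Pr (z k)) - f' (Pr zs)‖ ^ 2 := by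
  intro k
  have hαne : α ≠ 0 := ne_of_gt hα
  set X := Pr (z k) with hX
  set Y := Pr zs with hY
  set Q := P (z k) with hQ
  set X' := Pg ((2 : ℝ) • X - z k - α • f' X) with hX'
  clear_value X Y Q X'
  have hQs : α • Q = X - X' := by
    rw [hQ, hP, smul_smul, mul_inv_cancel₀ hαne, one_smul, ← hX, ← hX']
  have hfix : Pg ((2 : ℝ) • Y - zs - α • f' Y) = Y := by
    have h0 := hzs
    rw [hP] at h0
    have h1 : Pr zs - Pg ((2 : ℝ) • Pr zs - zs - α • f' (Pr zs)) = 0 := by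
      have h2 := congrArg (fun v => α • v) h0
      simpa [smul_smul, mul_inv_cancel₀ hαne] using h2
    have h3 := sub_eq_zero.mp h1
    rw [← hY] at h3
    exact h3.symm
  have A1 := prox_mono α hα r hr (z k) zs X Y (by rw [hX]; exact hPr (z k))
    (by rw [hY]; exact hPr zs)
  have hPg2 : IsProxPt (fun x => (α : EReal) * g x) ((2 : ℝ) • Y - zs - α • f' Y) Y := by
    have h4 := hPg ((2 : ℝ) • Y - zs - α • f' Y)
    rw [hfix] at h4
    exact h4
  have A2 := prox_mono α hα g hg ((2 : ℝ) • X - z k - α • f' X)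
    ((2 : ℝ) • Y - zs - α • f' Y) X' Y (by rw [hX']; exact hPg _) hPg2
  have A3' := coco f hfconv f' hf' L hL hLip X Y
  set W := z k - zs with hW
  set U := X - Y with hU
  set D := f' X - f' Y with hD
  have hx'e : X' = X - α • Q := by rw [hQs]; abel
  have eq1 : (z k - X) - (zs - Y) = W - U := by rw [hW, hU]; abel
  have eq2 : ((2 : ℝ) • X - z k - α • f' X - X') - ((2 : ℝ) • Y - zs - α • f' Y - Y) =
      U + α • Q - W - α • D := by
    rw [hx'e, hW, hU, hD]; module
  have eq3 : X' - Y = U - α • Q := by rw [hx'e, hU]; abel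
  rw [eq1] at A1
  rw [eq2, eq3] at A2
  have A3 : ‖D‖ ^ 2 ≤ L * ⟪D, U⟫ := by rw [hD, hU]; exact A3'
  -- rewrite the goal
  have hzk : z (k + 1) - zs = W - α • Q := by
    rw [hiter k, ← hQ, hW]; abel
  rw [hzk]
  -- expansions
  have E1 : ‖W - α • Q‖ ^ 2 = ‖W‖ ^ 2 - 2 * (α * ⟪W, Q⟫) + α ^ 2 * ‖Q‖ ^ 2 := by
    rw [norm_sub_sq_real, real_inner_smul_right, norm_smul, Real.norm_eq_abs, mul_pow, sq_abs]
  have E2 : ⟪U + α • Q - W - α • D, U - α • Q⟫ =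
      ‖U‖ ^ 2 - α ^ 2 * ‖Q‖ ^ 2 - ⟪W, U⟫ + α * ⟪W, Q⟫ - α * ⟪D, U⟫ + α ^ 2 * ⟪D, Q⟫ := by
    simp only [inner_sub_left, inner_sub_right, inner_add_left, inner_add_right,
      real_inner_smul_left, real_inner_smul_right, real_inner_self_eq_norm_sq,
      real_inner_comm Q U, real_inner_comm Q W, real_inner_comm U W, real_inner_comm Q D,
      real_inner_comm U D, real_inner_comm W D]
    rw [norm_smul, Real.norm_eq_abs, mul_pow, sq_abs]
    ring
  have E3 : ⟪W - U, U⟫ = ⟪W, U⟫ - ‖U‖ ^ 2 := by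
    simp only [inner_sub_left, real_inner_self_eq_norm_sq]
  rw [E3] at A1
  rw [E2] at A2
  rw [E1]
  have K : α ^ 2 * ‖Q‖ ^ 2 + α * ⟪D, U⟫ - α ^ 2 * ⟪D, Q⟫ ≤ α * ⟪W, Q⟫ := by linarith
  have cs : ⟪D, Q⟫ ≤ ‖D‖ * ‖Q‖ := real_inner_le_norm D Q
  have Y1 : 12 * L * (α * ⟪D, Q⟫) ≤ 9 * ‖D‖ ^ 2 + 4 * α ^ 2 * L ^ 2 * ‖Q‖ ^ 2 := by
    nlinarith [sq_nonneg (3 * ‖D‖ - 2 * α * L * ‖Q‖),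
      mul_le_mul_of_nonneg_left cs (by positivity : (0 : ℝ) ≤ 12 * L * α)]
  have h6L : (0 : ℝ) < 6 * L := by linarith
  rw [← mul_le_mul_iff_right₀ h6L]
  have eL : 6 * L * (‖W‖ ^ 2 - α ^ 2 * (1 - 2 * α * L / 3) * ‖Q‖ ^ 2 -
      α / (2 * L) * ‖D‖ ^ 2) =
      6 * L * ‖W‖ ^ 2 - 6 * L * α ^ 2 * ‖Q‖ ^ 2 + 4 * α ^ 3 * L ^ 2 * ‖Q‖ ^ 2 -
        3 * α * ‖D‖ ^ 2 := by
    field_simp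
    ring
  rw [eL]
  have K12 := mul_le_mul_of_nonneg_left K (by positivity : (0 : ℝ) ≤ 12 * L)
  have Yα := mul_le_mul_of_nonneg_left Y1 hα.le
  have A312 := mul_le_mul_of_nonneg_left A3 (by positivity : (0 : ℝ) ≤ 12 * α)
  nlinarith [K12, Yα, A312]
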